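/- Let m ∈ ℕ, I ⊆ {0,...,m-1} with |I| = n, S = ∪_{r∈I}[2πr/m, 2π(r+1)/m], and J ⊆ {0,...,m-1} such that the submatrix F_I(J) = (e^{2πijr/m})_{j∈J, r∈I} satisfies ‖F_I(J)w‖² ≥ cn‖w‖² for all w ∈ C^I (for some c > 0). Then Λ = {j + km : j ∈ J, k ∈ ℤ} is a sampling sequence for PW_S with bound c·(n/m): c(n/m)‖f‖² ≤ Σ_{λ∈Λ}|f(λ)|² for all f ∈ PW_S. -/

import Mathlib

open MeasureTheory Set

lemma norm_exp_I_mul_mul (x t : ℝ) : ‖Complex.exp (Complex.I * x * t)‖ = 1 := by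
  have h : Complex.I * x * t = ((x*t : ℝ) : ℂ) * Complex.I := by push_cast; ring
  rw [h]
  simp [Complex.norm_exp]

lemma rpow_two_eq (x : ℝ) : x ^ ((2:ENNReal)).toReal = x ^ 2 := by
  rw [show ((2:ENNReal)).toReal = ((2:ℕ):ℝ) by norm_num, Real.rpow_natCast]

lemma norm_exp_real_mul_I (z : ℂ) (a : ℝ) (hz : z = (a:ℂ)*Complex.I) :
    ‖Complex.exp z‖ = 1 := by
  subst hz
  rw [Complex.norm_exp]
  simp

lemma ioc_preimage_add (a b c : ℝ) :
    (fun x => x + c) ⁻¹' (Set.Ioc a b) = Set.Ioc (a - c) (b - c) := by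
  ext x
  simp only [Set.mem_preimage, Set.mem_Ioc]
  constructor <;> rintro ⟨h1, h2⟩ <;> exact ⟨by linarith, by linarith⟩

lemma mp_Ioc (a b c : ℝ) : MeasurePreserving (fun x => x + c)
    (volume.restrict (Set.Ioc (a-c) (b-c))) (volume.restrict (Set.Ioc a b)) := by
  have h := (measurePreserving_add_right volume c).restrict_preimage
    (measurableSet_Ioc (a := a) (b := b))
  rwa [ioc_preimage_add] at h

lemma integral_Ioc_translate {E : Type*} [NormedAddCommGroup E] [NormedSpace ℝ E]
    (a b c : ℝ) (v : ℝ → E) :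
    ∫ s in Set.Ioc (a-c) (b-c), v (s + c) = ∫ t in Set.Ioc a b, v t :=
  (mp_Ioc a b c).integral_comp (measurableEmbedding_addRight c) v

lemma lintegral_Ioc_translate (a b c : ℝ) (v : ℝ → ENNReal) (hv : Measurable v) :
    ∫⁻ s in Set.Ioc (a-c) (b-c), v (s + c) = ∫⁻ t in Set.Ioc a b, v t :=
  (mp_Ioc a b c).lintegral_comp hv

lemma memLp_Ioc_translate (p : ENNReal) (a b c : ℝ) (v : ℝ → ℂ)
    (hv : MemLp v p (volume.restrict (Set.Ioc a b))) :
    MemLp (fun s => v (s + c)) p (volume.restrict (Set.Ioc (a-c) (b-c))) := by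
  have hmap := (mp_Ioc a b c).map_eq
  have h1 : MemLp v p (Measure.map (fun x => x + c) (volume.restrict (Set.Ioc (a-c) (b-c)))) := by
    rwa [hmap]
  exact (memLp_map_measure_iff (by rw [hmap]; exact hv.aestronglyMeasurable)
    ((measurable_add_const c).aemeasurable)).1 h1

section PlancherelPart

lemma integral_norm_f_sq (g : ℝ → ℂ) (hgm : Measurable g) (hgi : Integrable g)
    (hg2 : MemLp g 2 (volume : Measure ℝ))
    (hsupp : ∀ᵐ t : ℝ, t ∉ Set.Ioc 0 (2*Real.pi) → g t = 0)
    (f : ℝ → ℂ) (hf : ∀ x : ℝ, f x = ∫ t : ℝ, Complex.exp (Complex.I * x * t) * g t)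
    (hpar : ∀ x : ℝ, (Summable fun k : ℤ => ‖f (x + k)‖^2) ∧
      (∑' k : ℤ, ‖f (x + k)‖^2 = 2*Real.pi * ∫ t in Set.Ioc 0 (2*Real.pi), ‖g t‖^2))
    (hfc : Continuous f) :
    ∫ x : ℝ, ‖f x‖^2 = (2*Real.pi) * ∫ t in Set.Ioc 0 (2*Real.pi), ‖g t‖^2 := by
  have hπ : (0:ℝ) < 2*Real.pi := by positivity
  set C : ℝ := ∫ t in Set.Ioc 0 (2*Real.pi), ‖g t‖^2 with hC
  have hCnn : 0 ≤ C := setIntegral_nonneg measurableSet_Ioc (fun t _ => by positivity)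
  have hfm : Measurable fun x : ℝ => ENNReal.ofReal (‖f x‖^2) :=
    ENNReal.measurable_ofReal.comp ((hfc.norm.pow 2).measurable)
  rw [integral_eq_lintegral_of_nonneg_ae (f := fun x => ‖f x‖^2) (Filter.Eventually.of_forall fun x => by positivity)
    ((hfc.norm.pow 2).aestronglyMeasurable)]
  have hcover : (⋃ k : ℤ, Set.Ioc (k:ℝ) ((k:ℝ)+1)) = Set.univ := by
    ext x
    simp only [Set.mem_iUnion, Set.mem_univ, iff_true, Set.mem_Ioc]
    exact ⟨⌈x⌉ - 1, by push_cast; constructor <;> linarith [Int.le_ceil x, Int.ceil_lt_add_one x]⟩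
  have hdisj : Pairwise (Function.onFun Disjoint fun k : ℤ => Set.Ioc (k:ℝ) ((k:ℝ)+1)) := by
    intro k k' hkk
    simp only [Function.onFun]
    rw [Set.Ioc_disjoint_Ioc]
    rcases lt_or_gt_of_ne hkk with h | h
    · have h1 : (k:ℝ) + 1 ≤ (k':ℝ) := by exact_mod_cast h
      exact le_trans inf_le_left (le_trans h1 le_sup_right)
    · have h1 : (k':ℝ) + 1 ≤ (k:ℝ) := by exact_mod_cast h
      exact le_trans inf_le_right (le_trans h1 le_sup_left)
  have hlin : ∫⁻ x : ℝ, ENNReal.ofReal (‖f x‖^2) = ENNReal.ofReal (2*Real.pi * C) := by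
    calc ∫⁻ x : ℝ, ENNReal.ofReal (‖f x‖^2)
        = ∫⁻ x in ⋃ k : ℤ, Set.Ioc (k:ℝ) ((k:ℝ)+1), ENNReal.ofReal (‖f x‖^2) := by
          rw [hcover, Measure.restrict_univ]
      _ = ∑' k : ℤ, ∫⁻ x in Set.Ioc (k:ℝ) ((k:ℝ)+1), ENNReal.ofReal (‖f x‖^2) :=
          lintegral_iUnion (fun _ => measurableSet_Ioc) hdisj _
      _ = ∑' k : ℤ, ∫⁻ x in Set.Ioc (0:ℝ) 1, ENNReal.ofReal (‖f (x + (k:ℝ))‖^2) := by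
          refine tsum_congr fun k => ?_
          rw [← lintegral_Ioc_translate (k:ℝ) ((k:ℝ)+1) (k:ℝ) _ hfm, sub_self,
            add_sub_cancel_left]
      _ = ∫⁻ x in Set.Ioc (0:ℝ) 1, ∑' k : ℤ, ENNReal.ofReal (‖f (x + (k:ℝ))‖^2) :=
          (lintegral_tsum (μ := volume.restrict (Set.Ioc (0:ℝ) 1))
            (f := fun (k:ℤ) (x:ℝ) => ENNReal.ofReal (‖f (x + (k:ℝ))‖^2)) fun k =>
            ((hfm.comp (measurable_add_const (k:ℝ))).aemeasurable)).symm
      _ = ∫⁻ _x in Set.Ioc (0:ℝ) 1, ENNReal.ofReal (2*Real.pi * C) := by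
          refine lintegral_congr fun x => ?_
          rw [← ENNReal.ofReal_tsum_of_nonneg (fun k => by positivity) (hpar x).1, (hpar x).2]
      _ = ENNReal.ofReal (2*Real.pi * C) := by
          rw [setLIntegral_const, Real.volume_Ioc]
          norm_num
  rw [hlin, ENNReal.toReal_ofReal (by positivity)]

lemma parseval_Ioc (T : ℝ) (hT : 0 < T) (u : ℝ → ℂ) (hum : Measurable u)
    (hu : MemLp u 2 (volume.restrict (Ioc 0 T))) :
    Summable (fun k : ℤ => ‖∫ t in Ioc 0 T, Complex.exp (Complex.I * k * (2*Real.pi/T) * t) * u t‖^2) ∧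
    ∑' k : ℤ, ‖∫ t in Ioc 0 T, Complex.exp (Complex.I * k * (2*Real.pi/T) * t) * u t‖^2
      = T * ∫ t in Ioc 0 T, ‖u t‖^2 := by
  haveI : Fact (0 < T) := ⟨hT⟩
  have h0T : (0:ℝ) + T = T := zero_add T
  set F : AddCircle T → ℂ := AddCircle.liftIoc T 0 u with hF
  have hFcoe : ∀ t ∈ Ioc (0:ℝ) T, F ((t : ℝ) : AddCircle T) = u t := by
    intro t ht
    exact AddCircle.liftIoc_coe_apply (by rwa [h0T])
  -- MemLp of F wrt circle volume
  have hFaesm : AEStronglyMeasurable F (volume : Measure (AddCircle T)) := by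
    have hmeas : Measurable F :=
      (hum.comp measurable_subtype_coe).comp (AddCircle.measurableEquivIoc T 0).measurable
    exact hmeas.aestronglyMeasurable
  have h1 : MemLp F 2 (volume : Measure (AddCircle T)) := by
    rw [← (AddCircle.measurePreserving_mk T 0).map_eq]
    rw [memLp_map_measure_iff (by rw [(AddCircle.measurePreserving_mk T 0).map_eq]; exact hFaesm)
      (AddCircle.measurable_mk').aemeasurable]
    rw [h0T]
    apply hu.ae_eq
    refine (ae_restrict_iff' measurableSet_Ioc).2 (Filter.Eventually.of_forall fun t ht => ?_)
    exact (hFcoe t ht).symm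
  have h2 : MemLp F 2 (AddCircle.haarAddCircle : Measure (AddCircle T)) := by
    have : (AddCircle.haarAddCircle : Measure (AddCircle T))
        = (ENNReal.ofReal T)⁻¹ • (volume : Measure (AddCircle T)) := by
      rw [AddCircle.volume_eq_smul_haarAddCircle, smul_smul,
        ENNReal.inv_mul_cancel (by simpa using hT) ENNReal.ofReal_ne_top, one_smul]
    rw [this]
    exact h1.smul_measure (by simp [hT])
  set FL := h2.toLp F with hFL
  have hae : (FL : AddCircle T → ℂ) =ᵐ[(AddCircle.haarAddCircle : Measure (AddCircle T))] F :=
    h2.coeFn_toLp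
  have hcoeff : ∀ i : ℤ, fourierCoeff (FL : AddCircle T → ℂ) i = fourierCoeff F i := by
    intro i
    unfold fourierCoeff
    exact integral_congr_ae (hae.mono fun θ h => by simp only [h])
  have hpars := tsum_sq_fourierCoeff FL
  have hRHS : (∫ t : AddCircle T, ‖(FL : AddCircle T → ℂ) t‖^2 ∂AddCircle.haarAddCircle)
      = (1/T) * ∫ t in Ioc 0 T, ‖u t‖^2 := by
    have e1 : (∫ t : AddCircle T, ‖(FL : AddCircle T → ℂ) t‖^2 ∂AddCircle.haarAddCircle)
        = ∫ t : AddCircle T, ‖F t‖^2 ∂AddCircle.haarAddCircle :=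
      integral_congr_ae (hae.mono fun θ h => by simp only [h])
    have e2 : (∫ t in Ioc (0:ℝ) (0+T), ‖F ((t:ℝ) : AddCircle T)‖^2) 
        = ∫ t : AddCircle T, ‖F t‖^2 := AddCircle.integral_preimage T 0 (fun θ => ‖F θ‖^2)
    have e3 : (∫ t : AddCircle T, ‖F t‖^2) 
        = T * ∫ t : AddCircle T, ‖F t‖^2 ∂AddCircle.haarAddCircle := by
      rw [AddCircle.volume_eq_smul_haarAddCircle, integral_smul_measure,
        ENNReal.toReal_ofReal hT.le, smul_eq_mul]
    have e4 : (∫ t in Ioc (0:ℝ) (0+T), ‖F ((t:ℝ) : AddCircle T)‖^2)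
        = ∫ t in Ioc (0:ℝ) T, ‖u t‖^2 := by
      rw [h0T]
      refine setIntegral_congr_fun measurableSet_Ioc fun t ht => ?_
      rw [hFcoe t ht]
    rw [e1, ← e4, e2, e3, ← mul_assoc, one_div, inv_mul_cancel₀ hT.ne', one_mul]
  have hc : ∀ k : ℤ, (∫ t in Ioc 0 T, Complex.exp (Complex.I * k * (2*Real.pi/T) * t) * u t)
      = T • fourierCoeff F (-k) := by
    intro k
    rw [fourierCoeff_eq_intervalIntegral F (-k) 0, neg_neg]
    rw [smul_smul]
    rw [show T * (1/T : ℝ) = 1 by field_simp, one_smul]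
    rw [intervalIntegral.integral_of_le (by linarith), h0T]
    refine setIntegral_congr_fun measurableSet_Ioc fun t ht => ?_
    rw [hFcoe t ht, fourier_coe_apply, smul_eq_mul]
    congr 2
    push_cast
    field_simp
  have hnorm : ∀ k : ℤ, ‖∫ t in Ioc 0 T, Complex.exp (Complex.I * k * (2*Real.pi/T) * t) * u t‖^2
      = T^2 * ‖fourierCoeff (FL : AddCircle T → ℂ) (-k)‖^2 := by
    intro k
    rw [hc k, hcoeff]
    rw [norm_smul]
    simp [abs_of_pos hT, mul_pow]
  have hsummable : Summable (fun i : ℤ => ‖fourierCoeff (FL : AddCircle T → ℂ) i‖^2) := by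
    have h := lp.memℓp (fourierBasis.repr FL)
    rw [memℓp_gen_iff (by norm_num : 0 < (2 : ENNReal).toReal)] at h
    have heq : ∀ i : ℤ, ‖(fourierBasis.repr FL) i‖ ^ ((2:ENNReal).toReal)
        = ‖fourierCoeff (FL : AddCircle T → ℂ) i‖^2 := by
      intro i
      rw [fourierBasis_repr, show ((2:ENNReal)).toReal = ((2:ℕ):ℝ) by norm_num,
        Real.rpow_natCast]
    exact h.congr heq
  constructor
  · simp only [hnorm]
    apply Summable.mul_left
    exact ((Equiv.neg ℤ).summable_iff (f := fun i => ‖fourierCoeff (FL : AddCircle T → ℂ) i‖^2)).2 hsummable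
  · simp only [hnorm]
    rw [tsum_mul_left]
    have hswap : ∑' (k:ℤ), ‖fourierCoeff (FL : AddCircle T → ℂ) (-k)‖^2
        = ∑' (i:ℤ), ‖fourierCoeff (FL : AddCircle T → ℂ) i‖^2 :=
      (Equiv.neg ℤ).tsum_eq (fun i => ‖fourierCoeff (FL : AddCircle T → ℂ) i‖^2)
    rw [hswap, hpars, hRHS]
    field_simp

def IsPW (S : Set ℝ) (f : ℝ → ℂ) : Prop :=
  ∃ g : ℝ → ℂ, Integrable g ∧ MemLp g 2 ∧ (∀ t, t ∉ S → g t = 0) ∧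
    ∀ x : ℝ, f x = ∫ t : ℝ, Complex.exp (Complex.I * x * t) * g t

/-- a lower bound for the submatrix `F_I(J)` of the Fourier matrix
yields the sampling bound `c·(n/m)` for `Λ = {j+km : j∈J, k∈ℤ}` on `PW_S`. -/
theorem stmt_8 (m n : ℕ) (hm : 0 < m) (I : Finset (Fin m)) (hI : I.card = n)
    (S : Set ℝ)
    (hS : S = ⋃ r ∈ I, Set.Icc (2 * Real.pi * (r : ℕ) / m) (2 * Real.pi * ((r : ℕ) + 1) / m))
    (J : Finset (Fin m)) (c : ℝ) (hc : 0 < c)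
    (hmat : ∀ w : Fin m → ℂ,
      c * n * ∑ r ∈ I, ‖w r‖ ^ 2 ≤
        ∑ j ∈ J, ‖∑ r ∈ I,
          Complex.exp (2 * Real.pi * Complex.I * (j : ℕ) * (r : ℕ) / m) * w r‖ ^ 2)
    (Λ : Set ℤ) (hΛ : Λ = {l : ℤ | ∃ j ∈ J, ∃ k : ℤ, l = (j : ℕ) + k * m}) :
    ∀ f : ℝ → ℂ, IsPW S f →
      c * ((n : ℝ) / m) * ∫ x : ℝ, ‖f x‖ ^ 2 ≤ ∑' l : Λ, ‖f ((l : ℤ) : ℝ)‖ ^ 2 := by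
  intro f hPW
  obtain ⟨g₀, hg₀i, hg₀2, hg₀supp, hf₀⟩ := hPW
  -- replace g₀ by a measurable representative g
  set g : ℝ → ℂ := hg₀i.1.mk g₀ with hgdef
  have hgm : StronglyMeasurable g := hg₀i.1.stronglyMeasurable_mk
  have hgMeas : Measurable g := hgm.measurable
  have hgg : g₀ =ᵐ[volume] g := hg₀i.1.ae_eq_mk
  have hgi : Integrable g := hg₀i.congr hgg
  have hg2 : MemLp g 2 (volume : Measure ℝ) := hg₀2.ae_eq hgg
  have hf : ∀ x : ℝ, f x = ∫ t : ℝ, Complex.exp (Complex.I * x * t) * g t := by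
    intro x
    rw [hf₀ x]
    exact integral_congr_ae (hgg.mono fun t ht => by simp only [ht])
  have hmpos : (0:ℝ) < m := by exact_mod_cast hm
  have hπ : (0:ℝ) < Real.pi := Real.pi_pos
  have hπ2 : (0:ℝ) < 2*Real.pi := by positivity
  set T : ℝ := 2*Real.pi/m with hTdef
  have hTpos : (0:ℝ) < T := by positivity
  have hmT : (m:ℝ) * T = 2*Real.pi := by rw [hTdef]; field_simp
  have hend1 : ∀ r : Fin m, 2 * Real.pi * (r:ℕ) / m = ((r:ℕ):ℝ) * T := by
    intro r; rw [hTdef]; ring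
  have hend2 : ∀ r : Fin m, 2 * Real.pi * ((r:ℕ) + 1) / m = ((r:ℕ):ℝ) * T + T := by
    intro r; rw [hTdef]; ring
  -- a.e. support facts
  have hsuppae : ∀ᵐ t : ℝ, g t ≠ 0 → t ∈ S := by
    filter_upwards [hgg] with t ht hgt
    by_contra hts
    exact hgt (by rw [← ht]; exact hg₀supp t hts)
  have hSmem : ∀ t ∈ S, ∃ r : Fin m, r ∈ I ∧ ((r:ℕ):ℝ)*T ≤ t ∧ t ≤ ((r:ℕ):ℝ)*T + T := by
    intro t ht
    rw [hS] at ht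
    obtain ⟨r, hr, htr⟩ := Set.mem_iUnion₂.1 ht
    rw [hend1 r, hend2 r] at htr
    exact ⟨r, hr, htr.1, htr.2⟩
  have hae_not : ∀ᵐ t : ℝ, ¬ ∃ r : Fin m, t = ((r:ℕ):ℝ)*T := by
    have hset : {x : ℝ | ∃ r : Fin m, x = ((r:ℕ):ℝ)*T}
        = Set.range (fun r : Fin m => ((r:ℕ):ℝ)*T) := by
      ext x; simp [Set.mem_range, eq_comm]
    have h0 : volume {x : ℝ | ∃ r : Fin m, x = ((r:ℕ):ℝ)*T} = 0 := by
      rw [hset]; exact (Set.finite_range _).countable.measure_zero _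
    exact measure_eq_zero_iff_ae_notMem.1 h0
  set U : Set ℝ := ⋃ r ∈ I, Set.Ioc (((r:ℕ):ℝ)*T) (((r:ℕ):ℝ)*T + T) with hUdef
  have hsuppU : ∀ᵐ t : ℝ, t ∉ U → g t = 0 := by
    filter_upwards [hsuppae, hae_not] with t htS htE htU
    by_contra hgt
    obtain ⟨r, hrI, h1, h2⟩ := hSmem t (htS hgt)
    have h1' : ((r:ℕ):ℝ)*T < t := lt_of_le_of_ne h1 (fun h => htE ⟨r, h.symm⟩)
    exact htU (Set.mem_biUnion hrI ⟨h1', h2⟩)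
  have hsupp2π : ∀ᵐ t : ℝ, t ∉ Set.Ioc 0 (2*Real.pi) → g t = 0 := by
    filter_upwards [hsuppae, hae_not] with t htS htE htI
    by_contra hgt
    obtain ⟨r, _, h1, h2⟩ := hSmem t (htS hgt)
    have h1' : ((r:ℕ):ℝ)*T < t := lt_of_le_of_ne h1 (fun h => htE ⟨r, h.symm⟩)
    have hr0 : (0:ℝ) ≤ ((r:ℕ):ℝ)*T := by positivity
    have hrm : ((r:ℕ):ℝ) + 1 ≤ (m:ℝ) := by exact_mod_cast r.isLt
    have h2' : t ≤ 2*Real.pi := by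
      calc t ≤ ((r:ℕ):ℝ)*T + T := h2
        _ = (((r:ℕ):ℝ) + 1) * T := by ring
        _ ≤ (m:ℝ) * T := by nlinarith
        _ = 2*Real.pi := hmT
    exact htI ⟨lt_of_le_of_lt hr0 h1', h2'⟩
  -- basic integrability of the phase-times-g functions
  have hexp : ∀ x t : ℝ, ‖Complex.exp (Complex.I * x * t) * g t‖ = ‖g t‖ := by
    intro x t; rw [norm_mul, norm_exp_I_mul_mul, one_mul]
  have hintx : ∀ x : ℝ, Integrable (fun t : ℝ => Complex.exp (Complex.I * x * t) * g t) := by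
    intro x
    refine hgi.norm.mono' ?_ (Filter.Eventually.of_forall fun t => le_of_eq (hexp x t))
    apply Measurable.aestronglyMeasurable
    fun_prop
  have hfc : Continuous f := by
    have hcont : Continuous fun x : ℝ => ∫ t : ℝ, Complex.exp (Complex.I * x * t) * g t :=
      continuous_of_dominated (fun x => (hintx x).aestronglyMeasurable)
        (fun x => Filter.Eventually.of_forall fun t => le_of_eq (hexp x t)) hgi.norm
        (Filter.Eventually.of_forall fun t => by fun_prop)
    rw [funext hf]; exact hcont
  -- Part B : Plancherel via periodization
  have hparB : ∀ x : ℝ, (Summable fun k : ℤ => ‖f (x + (k:ℝ))‖^2) ∧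
      (∑' k : ℤ, ‖f (x + (k:ℝ))‖^2 = 2*Real.pi * ∫ t in Set.Ioc 0 (2*Real.pi), ‖g t‖^2) := by
    intro x
    have hum : Measurable fun t : ℝ => Complex.exp (Complex.I * x * t) * g t := by fun_prop
    have hu2 : MemLp (fun t : ℝ => Complex.exp (Complex.I * x * t) * g t) 2
        (volume.restrict (Set.Ioc 0 (2*Real.pi))) :=
      MemLp.of_le (hg2.restrict _) hum.aestronglyMeasurable
        (Filter.Eventually.of_forall fun t => le_of_eq (hexp x t))
    obtain ⟨hsum, hval⟩ := parseval_Ioc (2*Real.pi) hπ2 _ hum hu2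
    have hfk : ∀ k : ℤ, f (x + (k:ℝ)) = ∫ t in Set.Ioc 0 (2*Real.pi),
        Complex.exp (Complex.I * (k:ℂ) * (2*Real.pi/((2*Real.pi : ℝ) : ℂ)) * t) *
          (Complex.exp (Complex.I * x * t) * g t) := by
      intro k
      rw [hf]
      have hz : ∀ᵐ t : ℝ, t ∉ Set.Ioc 0 (2*Real.pi) →
          Complex.exp (Complex.I * ((x + (k:ℝ) : ℝ) : ℂ) * t) * g t = 0 :=
        hsupp2π.mono fun t ht hts => by rw [ht hts, mul_zero]
      rw [← setIntegral_eq_integral_of_ae_compl_eq_zero hz]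
      refine setIntegral_congr_fun measurableSet_Ioc fun t _ => ?_
      rw [← mul_assoc, ← Complex.exp_add]
      congr 2
      have hpi : (Real.pi:ℂ) ≠ 0 := Complex.ofReal_ne_zero.mpr Real.pi_ne_zero
      push_cast
      field_simp
      ring
    constructor
    · exact hsum.congr fun k => by rw [← hfk k]
    · have h1 : ∑' k : ℤ, ‖f (x + (k:ℝ))‖^2
          = ∑' k : ℤ, ‖∫ t in Set.Ioc 0 (2*Real.pi),
            Complex.exp (Complex.I * (k:ℂ) * (2*Real.pi/((2*Real.pi : ℝ) : ℂ)) * t) *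
              (Complex.exp (Complex.I * x * t) * g t)‖^2 :=
        tsum_congr fun k => by rw [hfk k]
      rw [h1, hval]
      congr 1
      refine setIntegral_congr_fun measurableSet_Ioc fun t _ => ?_
      rw [hexp]
  have hplanch : ∫ x : ℝ, ‖f x‖^2 = 2*Real.pi * ∫ t in Set.Ioc 0 (2*Real.pi), ‖g t‖^2 :=
    integral_norm_f_sq g hgMeas hgi hg2 hsupp2π f hf hparB hfc

  -- Part C : the sampling sum
  set v : Fin m → ℝ → ℂ := fun j s => ∑ r ∈ I,
    Complex.exp (2 * Real.pi * Complex.I * (j:ℕ) * (r:ℕ) / m) * g (s + ((r:ℕ):ℝ)*T) with hvdef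
  have hvm : ∀ j, Measurable (v j) := by
    intro j
    rw [hvdef]
    apply Finset.measurable_sum
    intro r _
    exact measurable_const.mul (hgMeas.comp (measurable_add_const _))
  have hGr2 : ∀ r : Fin m, MemLp (fun s => g (s + ((r:ℕ):ℝ)*T)) 2
      (volume.restrict (Set.Ioc 0 T)) := by
    intro r
    have h := memLp_Ioc_translate 2 (((r:ℕ):ℝ)*T) (((r:ℕ):ℝ)*T + T) (((r:ℕ):ℝ)*T) g
      (hg2.restrict _)
    rwa [sub_self, add_sub_cancel_left] at h
  have hGrInt : ∀ r : Fin m, Integrable (fun s => g (s + ((r:ℕ):ℝ)*T))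
      (volume.restrict (Set.Ioc 0 T)) := by
    intro r
    have h := memLp_Ioc_translate 1 (((r:ℕ):ℝ)*T) (((r:ℕ):ℝ)*T + T) (((r:ℕ):ℝ)*T) g
      ((memLp_one_iff_integrable.2 hgi).restrict _)
    rw [sub_self, add_sub_cancel_left] at h
    exact memLp_one_iff_integrable.1 h
  have hv2 : ∀ j, MemLp (v j) 2 (volume.restrict (Set.Ioc 0 T)) := by
    intro j
    have h := memLp_finset_sum' (μ := volume.restrict (Set.Ioc 0 T)) I
      (f := fun (r : Fin m) (s : ℝ) =>
        Complex.exp (2 * Real.pi * Complex.I * (j:ℕ) * (r:ℕ) / m) * g (s + ((r:ℕ):ℝ)*T))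
      (fun r _ => (hGr2 r).const_mul _)
    refine MemLp.ae_eq (Filter.Eventually.of_forall fun s => ?_) h
    simp [hvdef]
  have hsqInt : ∀ (u : ℝ → ℂ), MemLp u 2 (volume.restrict (Set.Ioc 0 T)) →
      Integrable (fun s => ‖u s‖^2) (volume.restrict (Set.Ioc 0 T)) := by
    intro u hu
    have h := hu.integrable_norm_rpow (by norm_num) (by norm_num)
    exact h.congr (Filter.Eventually.of_forall fun s => rpow_two_eq _)
  have hptwise : ∀ s : ℝ, c * n * ∑ r ∈ I, ‖g (s + ((r:ℕ):ℝ)*T)‖^2 ≤ ∑ j ∈ J, ‖v j s‖^2 := by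
    intro s
    have h := hmat (fun r => g (s + ((r:ℕ):ℝ)*T))
    simp only [hvdef]
    exact h
  have hIntSum1 : Integrable (fun s => c * n * ∑ r ∈ I, ‖g (s + ((r:ℕ):ℝ)*T)‖^2)
      (volume.restrict (Set.Ioc 0 T)) := by
    apply Integrable.const_mul
    exact integrable_finset_sum _ (fun r _ => hsqInt _ (hGr2 r))
  have hIntSum2 : Integrable (fun s => ∑ j ∈ J, ‖v j s‖^2) (volume.restrict (Set.Ioc 0 T)) :=
    integrable_finset_sum _ (fun j _ => hsqInt _ (hv2 j))
  have hmono := integral_mono hIntSum1 hIntSum2 hptwise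
  -- disjointness of the translated intervals
  have hdisjI : (↑I : Set (Fin m)).Pairwise
      (Function.onFun Disjoint fun r : Fin m => Set.Ioc (((r:ℕ):ℝ)*T) (((r:ℕ):ℝ)*T + T)) := by
    intro r _ r' _ hne
    have hnn : (r:ℕ) ≠ (r':ℕ) := fun h => hne (Fin.ext h)
    simp only [Function.onFun]
    rw [Set.Ioc_disjoint_Ioc]
    rcases lt_or_gt_of_ne hnn with h | h
    · have h1 : ((r:ℕ):ℝ) + 1 ≤ ((r':ℕ):ℝ) := by exact_mod_cast h
      have h2 : ((r:ℕ):ℝ)*T + T ≤ ((r':ℕ):ℝ)*T := by nlinarith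
      exact le_trans inf_le_left (le_trans h2 le_sup_right)
    · have h1 : ((r':ℕ):ℝ) + 1 ≤ ((r:ℕ):ℝ) := by exact_mod_cast h
      have h2 : ((r':ℕ):ℝ)*T + T ≤ ((r:ℕ):ℝ)*T := by nlinarith
      exact le_trans inf_le_right (le_trans h2 le_sup_left)
  have hgn2 : Integrable (fun t : ℝ => ‖g t‖^2) := by
    have h := hg2.integrable_norm_rpow (by norm_num) (by norm_num)
    exact h.congr (Filter.Eventually.of_forall fun s => rpow_two_eq _)
  have hterm : ∀ r : Fin m, ∫ s in Set.Ioc 0 T, ‖g (s + ((r:ℕ):ℝ)*T)‖^2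
      = ∫ t in Set.Ioc (((r:ℕ):ℝ)*T) (((r:ℕ):ℝ)*T + T), ‖g t‖^2 := by
    intro r
    have h := integral_Ioc_translate (((r:ℕ):ℝ)*T) (((r:ℕ):ℝ)*T + T) (((r:ℕ):ℝ)*T)
      (fun t : ℝ => ‖g t‖^2)
    rwa [sub_self, add_sub_cancel_left] at h
  have hLHSeq : (∫ s in Set.Ioc 0 T, (c * n * ∑ r ∈ I, ‖g (s + ((r:ℕ):ℝ)*T)‖^2))
      = c * n * ∫ t : ℝ, ‖g t‖^2 := by
    rw [integral_const_mul]
    congr 1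
    rw [integral_finset_sum _ (fun r _ => hsqInt _ (hGr2 r))]
    rw [Finset.sum_congr rfl (fun r _ => hterm r)]
    rw [← integral_biUnion_finset I (fun r _ => measurableSet_Ioc) hdisjI
      (fun r _ => hgn2.integrableOn)]
    exact setIntegral_eq_integral_of_ae_compl_eq_zero
      (hsuppU.mono fun t ht htU => by rw [ht htU]; simp)
  -- per-j Parseval on (0, T]
  have hkey : ∀ j : Fin m, (Summable fun k : ℤ => ‖f (((j:ℕ):ℝ) + (k:ℝ)*m)‖^2) ∧
      ∑' k : ℤ, ‖f (((j:ℕ):ℝ) + (k:ℝ)*m)‖^2 = T * ∫ s in Set.Ioc 0 T, ‖v j s‖^2 := by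
    intro j
    set u : ℝ → ℂ := fun s => Complex.exp (Complex.I * ((j:ℕ):ℝ) * s) * v j s with hudef
    have hnu : ∀ s : ℝ, ‖u s‖ = ‖v j s‖ := by
      intro s
      rw [hudef]
      simp only []
      rw [norm_mul, norm_exp_I_mul_mul, one_mul]
    have hum : Measurable u := by
      rw [hudef]
      exact ((Complex.measurable_exp.comp (by fun_prop))).mul (hvm j)
    have hu2 : MemLp u 2 (volume.restrict (Set.Ioc 0 T)) :=
      MemLp.of_le (hv2 j) hum.aestronglyMeasurable
        (Filter.Eventually.of_forall fun s => le_of_eq (hnu s))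
    obtain ⟨hsum, hval⟩ := parseval_Ioc T hTpos u hum hu2
    have hfval : ∀ k : ℤ, f (((j:ℕ):ℝ) + (k:ℝ)*m)
        = ∫ t in Set.Ioc 0 T, Complex.exp (Complex.I * (k:ℂ) * (2*Real.pi/(T:ℂ)) * t) * u t := by
      intro k
      rw [hf]
      set x : ℝ := ((j:ℕ):ℝ) + (k:ℝ)*m with hxdef
      have hz : ∀ᵐ t : ℝ, t ∉ U → Complex.exp (Complex.I * (x:ℂ) * t) * g t = 0 :=
        hsuppU.mono fun t ht htU => by rw [ht htU, mul_zero]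
      rw [← setIntegral_eq_integral_of_ae_compl_eq_zero hz, hUdef]
      rw [integral_biUnion_finset I (fun r _ => measurableSet_Ioc) hdisjI
        (fun r _ => ((hintx x).integrableOn))]
      have htrans : ∀ r : Fin m, (∫ t in Set.Ioc (((r:ℕ):ℝ)*T) (((r:ℕ):ℝ)*T + T),
          Complex.exp (Complex.I * (x:ℂ) * t) * g t)
          = ∫ s in Set.Ioc 0 T,
            Complex.exp (Complex.I * (x:ℂ) * ((s + ((r:ℕ):ℝ)*T : ℝ):ℂ)) * g (s + ((r:ℕ):ℝ)*T) := by
        intro r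
        have h := integral_Ioc_translate (((r:ℕ):ℝ)*T) (((r:ℕ):ℝ)*T + T) (((r:ℕ):ℝ)*T)
          (fun t : ℝ => Complex.exp (Complex.I * (x:ℂ) * t) * g t)
        rw [sub_self, add_sub_cancel_left] at h
        exact h.symm
      rw [Finset.sum_congr rfl (fun r _ => htrans r)]
      have hsplit : ∀ r ∈ I, ∀ s ∈ Set.Ioc (0:ℝ) T,
          Complex.exp (Complex.I * (x:ℂ) * ((s + ((r:ℕ):ℝ)*T : ℝ):ℂ)) * g (s + ((r:ℕ):ℝ)*T)
          = Complex.exp (Complex.I * (k:ℂ) * (2*Real.pi/(T:ℂ)) * s) *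
            (Complex.exp (2 * Real.pi * Complex.I * (j:ℕ) * (r:ℕ) / m) *
              (Complex.exp (Complex.I * ((j:ℕ):ℝ) * s) * g (s + ((r:ℕ):ℝ)*T))) := by
        intro r _ s _
        have hmne : ((m:ℕ):ℂ) ≠ 0 := Nat.cast_ne_zero.mpr hm.ne'
        have hTne : ((T:ℝ):ℂ) ≠ 0 := Complex.ofReal_ne_zero.mpr hTpos.ne'
        have hTc : ((T:ℝ):ℂ) = 2*(Real.pi:ℂ)/((m:ℕ):ℂ) := by rw [hTdef]; push_cast; ring
        have h1 : Complex.exp (Complex.I * (x:ℂ) * ((s + ((r:ℕ):ℝ)*T : ℝ):ℂ))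
            = Complex.exp (Complex.I * (k:ℂ) * (2*Real.pi/(T:ℂ)) * s) *
              Complex.exp (2 * Real.pi * Complex.I * (j:ℕ) * (r:ℕ) / m) *
              Complex.exp (Complex.I * ((j:ℕ):ℝ) * s) *
              Complex.exp (((k*(r:ℕ) : ℤ):ℂ) * (2 * Real.pi * Complex.I)) := by
          rw [← Complex.exp_add, ← Complex.exp_add, ← Complex.exp_add]
          congr 1
          have hcoef : 2 * (Real.pi:ℂ) / ((T:ℝ):ℂ) = ((m:ℕ):ℂ) := by
            have h2π : (2:ℂ)*(Real.pi:ℂ) ≠ 0 := by simp [Real.pi_ne_zero]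
            rw [hTc, div_div_eq_mul_div]
            exact mul_div_cancel_left₀ _ h2π
          rw [hxdef, hcoef]
          push_cast
          rw [hTc]
          field_simp
          ring
        rw [h1, Complex.exp_int_mul_two_pi_mul_I, mul_one]
        ring
      calc ∑ r ∈ I, ∫ s in Set.Ioc 0 T,
            Complex.exp (Complex.I * (x:ℂ) * ((s + ((r:ℕ):ℝ)*T : ℝ):ℂ)) * g (s + ((r:ℕ):ℝ)*T)
          = ∑ r ∈ I, ∫ s in Set.Ioc 0 T,
            Complex.exp (Complex.I * (k:ℂ) * (2*Real.pi/(T:ℂ)) * s) *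
              (Complex.exp (2 * Real.pi * Complex.I * (j:ℕ) * (r:ℕ) / m) *
                (Complex.exp (Complex.I * ((j:ℕ):ℝ) * s) * g (s + ((r:ℕ):ℝ)*T))) :=
            Finset.sum_congr rfl (fun r hr =>
              setIntegral_congr_fun measurableSet_Ioc (fun s hs => hsplit r hr s hs))
        _ = ∫ s in Set.Ioc 0 T, ∑ r ∈ I,
            Complex.exp (Complex.I * (k:ℂ) * (2*Real.pi/(T:ℂ)) * s) *
              (Complex.exp (2 * Real.pi * Complex.I * (j:ℕ) * (r:ℕ) / m) *
                (Complex.exp (Complex.I * ((j:ℕ):ℝ) * s) * g (s + ((r:ℕ):ℝ)*T))) := by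
            refine (integral_finset_sum _ (fun r _ => ?_)).symm
            refine (hGrInt r).norm.mono' ?_ (Filter.Eventually.of_forall fun s => ?_)
            · apply Measurable.aestronglyMeasurable
              refine ((Complex.measurable_exp.comp (by fun_prop)).mul
                (measurable_const.mul ((Complex.measurable_exp.comp (by fun_prop)).mul
                  (hgMeas.comp (measurable_add_const _)))))
            · rw [norm_mul, norm_mul, norm_mul,
                norm_exp_real_mul_I _ ((k:ℝ)*(2*Real.pi/T)*s) (by push_cast; ring),
                norm_exp_real_mul_I _ (2*Real.pi*(j:ℕ)*(r:ℕ)/m) (by push_cast; ring),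
                norm_exp_real_mul_I _ (((j:ℕ):ℝ)*s) (by push_cast; ring)]
              simp
        _ = ∫ t in Set.Ioc 0 T,
            Complex.exp (Complex.I * (k:ℂ) * (2*Real.pi/(T:ℂ)) * t) * u t := by
            refine setIntegral_congr_fun measurableSet_Ioc (fun s _ => ?_)
            rw [hudef, hvdef]
            simp only []
            rw [Finset.mul_sum, Finset.mul_sum]
            exact Finset.sum_congr rfl (fun r _ => by ring)
    constructor
    · exact hsum.congr fun k => by rw [← hfval k]
    · have h1 : ∑' k : ℤ, ‖f (((j:ℕ):ℝ) + (k:ℝ)*m)‖^2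
          = ∑' k : ℤ, ‖∫ t in Set.Ioc 0 T,
              Complex.exp (Complex.I * (k:ℂ) * (2*Real.pi/(T:ℂ)) * t) * u t‖^2 :=
        tsum_congr fun k => by rw [hfval k]
      rw [h1, hval]
      congr 1
      exact setIntegral_congr_fun measurableSet_Ioc (fun s _ => by rw [hnu s])
  -- reindexing the sampling set
  have heΛ : ∀ p : {j // j ∈ J} × ℤ, ((p.1.1 : ℕ) : ℤ) + p.2 * m ∈ Λ := by
    intro p
    rw [hΛ]
    exact ⟨p.1.1, p.1.2, p.2, rfl⟩
  have hebij : Function.Bijective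
      (fun p : {j // j ∈ J} × ℤ => (⟨((p.1.1 : ℕ) : ℤ) + p.2 * m, heΛ p⟩ : Λ)) := by
    constructor
    · rintro ⟨⟨j, hj⟩, k⟩ ⟨⟨j', hj'⟩, k'⟩ hpq
      have h : ((j:ℕ):ℤ) + k * m = ((j':ℕ):ℤ) + k' * m := Subtype.ext_iff.1 hpq
      have hj1 : (j:ℕ) < m := j.isLt
      have hj2 : (j':ℕ) < m := j'.isLt
      have hmZ : (0:ℤ) < (m:ℤ) := by exact_mod_cast hm
      have hd : (k - k') * (m:ℤ) = ((j':ℕ):ℤ) - ((j:ℕ):ℤ) := by ring_nf; linarith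
      have habs : |((j':ℕ):ℤ) - ((j:ℕ):ℤ)| < (m:ℤ) := by rw [abs_lt]; omega
      have hkk : k = k' := by
        by_contra hne
        have h1 : (1:ℤ) ≤ |k - k'| := Int.one_le_abs (sub_ne_zero.mpr hne)
        have h2 : (m:ℤ) ≤ |k - k'| * (m:ℤ) := le_mul_of_one_le_left hmZ.le h1
        have h3 : |k - k'| * (m:ℤ) = |(k - k') * (m:ℤ)| := by
          rw [abs_mul, abs_of_nonneg hmZ.le]
        rw [h3, hd] at h2
        linarith
      subst hkk
      have hjj : (j:ℕ) = (j':ℕ) := by omega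
      exact Prod.ext (Subtype.ext (Fin.ext hjj)) rfl
    · rintro ⟨l, hl⟩
      rw [hΛ] at hl
      obtain ⟨j, hj, k, hk⟩ := hl
      exact ⟨⟨⟨j, hj⟩, k⟩, Subtype.ext hk.symm⟩
  have ht1 : ∑' l : Λ, ‖f ((l:ℤ):ℝ)‖^2
      = ∑' p : {j // j ∈ J} × ℤ, ‖f (((p.1.1:ℕ):ℝ) + (p.2:ℝ)*m)‖^2 := by
    rw [← (Equiv.ofBijective _ hebij).tsum_eq (fun l : Λ => ‖f ((l:ℤ):ℝ)‖^2)]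
    refine tsum_congr fun p => ?_
    have harg : ((((Equiv.ofBijective _ hebij) p : Λ) : ℤ) : ℝ) = ((p.1.1:ℕ):ℝ) + (p.2:ℝ)*m := by
      show ((((p.1.1:ℕ):ℤ) + p.2 * m : ℤ) : ℝ) = _
      push_cast
      ring
    rw [harg]
  have hsump : Summable (fun p : {j // j ∈ J} × ℤ => ‖f (((p.1.1:ℕ):ℝ) + (p.2:ℝ)*m)‖^2) :=
    (summable_prod_of_nonneg (fun p => by positivity)).2
      ⟨fun j => (hkey j.1).1, Summable.of_finite⟩
  have ht2 : ∑' p : {j // j ∈ J} × ℤ, ‖f (((p.1.1:ℕ):ℝ) + (p.2:ℝ)*m)‖^2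
      = ∑ j ∈ J, (T * ∫ s in Set.Ioc 0 T, ‖v j s‖^2) := by
    rw [Summable.tsum_prod' hsump (fun j => (hkey j.1).1)]
    rw [tsum_fintype]
    calc ∑ b : {j // j ∈ J}, ∑' k : ℤ, ‖f (((b.1:ℕ):ℝ) + (k:ℝ)*m)‖^2
        = ∑ b : {j // j ∈ J}, (T * ∫ s in Set.Ioc 0 T, ‖v b.1 s‖^2) :=
          Finset.sum_congr rfl (fun b _ => (hkey b.1).2)
      _ = ∑ j ∈ J, (T * ∫ s in Set.Ioc 0 T, ‖v j s‖^2) :=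
          Finset.sum_coe_sort J (fun j => T * ∫ s in Set.Ioc 0 T, ‖v j s‖^2)
  have hfinal : c * n * ∫ t : ℝ, ‖g t‖^2 ≤ ∑ j ∈ J, ∫ s in Set.Ioc 0 T, ‖v j s‖^2 := by
    rw [← hLHSeq]
    refine le_trans hmono (le_of_eq ?_)
    exact integral_finset_sum _ (fun j _ => hsqInt _ (hv2 j))
  have hIg : ∫ t in Set.Ioc 0 (2*Real.pi), ‖g t‖^2 = ∫ t : ℝ, ‖g t‖^2 :=
    setIntegral_eq_integral_of_ae_compl_eq_zero
      (hsupp2π.mono fun t ht hts => by rw [ht hts]; simp)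
  rw [hplanch, hIg]
  calc c * ((n:ℝ)/m) * (2*Real.pi * ∫ t : ℝ, ‖g t‖^2)
      = T * (c * n * ∫ t : ℝ, ‖g t‖^2) := by rw [hTdef]; field_simp
    _ ≤ T * ∑ j ∈ J, ∫ s in Set.Ioc 0 T, ‖v j s‖^2 :=
        mul_le_mul_of_nonneg_left hfinal hTpos.le
    _ = ∑ j ∈ J, (T * ∫ s in Set.Ioc 0 T, ‖v j s‖^2) := Finset.mul_sum _ _ _
    _ = ∑' l : Λ, ‖f ((l:ℤ):ℝ)‖^2 := by rw [ht1, ht2]
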